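/- Let (s_n) be the integer sequence defined by s_0=2, s_1=24, s_2=256, and s_n = 20 s_{n-1} - 64 s_{n-2} - 384 s_{n-3} for n≥3. Then for all n≥0, s_n = 4^n · Σ_{k=0}^{⌊(n+1)/2⌋} C(n+2, 2k+1) · 3^k, where C denotes the binomial coefficient. -/
import Mathlib

open Finset

private def A (m : ℕ) : ℤ := ∑ k ∈ range (m + 1), ((m.choose (2 * k + 1)) : ℤ) * 3 ^ k
private def B (m : ℕ) : ℤ := ∑ k ∈ range (m + 1), ((m.choose (2 * k)) : ℤ) * 3 ^ k

private lemma hA (m : ℕ) : A (m + 1) = A m + B m := by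
  unfold A B
  have : ∀ k, (((m+1).choose (2*k+1)) : ℤ) * 3 ^ k
      = ((m.choose (2*k)) : ℤ) * 3 ^ k + ((m.choose (2*k+1)) : ℤ) * 3 ^ k := by
    intro k
    rw [Nat.choose_succ_succ]
    push_cast; ring
  rw [Finset.sum_congr rfl fun k _ => this k, Finset.sum_add_distrib,
    Finset.sum_range_succ, Finset.sum_range_succ (f := fun k => ((m.choose (2*k+1)) : ℤ) * 3 ^ k)]
  have e1 : m.choose (2*(m+1)) = 0 := Nat.choose_eq_zero_of_lt (by omega)
  have e2 : m.choose (2*(m+1)+1) = 0 := Nat.choose_eq_zero_of_lt (by omega)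
  rw [e1, e2]
  push_cast; ring

private lemma hB (m : ℕ) : B (m + 1) = 3 * A m + B m := by
  unfold A B
  rw [Finset.sum_range_succ' (f := fun k => (((m+1).choose (2*k)) : ℤ) * 3 ^ k),
    Finset.sum_range_succ' (f := fun k => ((m.choose (2*k)) : ℤ) * 3 ^ k)]
  simp only [Nat.choose_zero_right, Nat.cast_one, pow_zero, mul_one]
  have : ∀ k, (((m+1).choose (2*(k+1))) : ℤ) * 3 ^ (k+1)
      = 3 * (((m.choose (2*k+1)) : ℤ) * 3 ^ k) + ((m.choose (2*(k+1))) : ℤ) * 3 ^ (k+1) := by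
    intro k
    have : 2*(k+1) = (2*k+1) + 1 := by ring
    rw [this, Nat.choose_succ_succ]
    push_cast; ring
  rw [Finset.sum_congr rfl fun k _ => this k, Finset.sum_add_distrib, Finset.mul_sum,
    Finset.sum_range_succ (f := fun k => ((m.choose (2*(k+1))) : ℤ) * 3 ^ (k+1))]
  have e1 : m.choose (2*(m+1)) = 0 := Nat.choose_eq_zero_of_lt (by omega)
  rw [e1]
  push_cast [Nat.choose_zero_right]
  ring

private lemma hAkey (m : ℕ) : A (m + 2) = 2 * A (m + 1) + 2 * A m := by
  have h1 := hA (m + 1)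
  have h2 := hB m
  have h3 := hA m
  linarith

private lemma sum_eq_A (n : ℕ) :
    (∑ k ∈ Finset.range ((n + 1) / 2 + 1), ((n + 2).choose (2 * k + 1) : ℤ) * 3 ^ k)
      = A (n + 2) := by
  unfold A
  apply Finset.sum_subset
  · intro k hk
    simp only [Finset.mem_range] at *
    omega
  · intro k hk hk'
    simp only [Finset.mem_range] at *
    have : (n + 2).choose (2 * k + 1) = 0 := Nat.choose_eq_zero_of_lt (by omega)
    rw [this]
    push_cast; ring

theorem stmt3 (s : ℕ → ℤ)
    (h0 : s 0 = 2) (h1 : s 1 = 24) (h2 : s 2 = 256)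
    (hrec : ∀ n, s (n + 3) = 20 * s (n + 2) - 64 * s (n + 1) - 384 * s n) :
    ∀ n, s n = 4 ^ n *
      ∑ k ∈ Finset.range ((n + 1) / 2 + 1), ((n + 2).choose (2 * k + 1) : ℤ) * 3 ^ k := by
  have key : ∀ n, s n = 4 ^ n * A (n + 2) := by
    have base : ∀ n, s n = 4 ^ n * A (n + 2) ∧ s (n+1) = 4 ^ (n+1) * A (n + 3) ∧
        s (n+2) = 4 ^ (n+2) * A (n + 4) := by
      intro n
      induction n with
      | zero =>
        refine ⟨?_, ?_, ?_⟩ <;> simp [A, Finset.sum_range_succ, h0, h1, h2] <;> decide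
      | succ m ih =>
        obtain ⟨p0, p1, p2⟩ := ih
        refine ⟨p1, p2, ?_⟩
        rw [hrec m, p0, p1, p2, hAkey (m + 3)]
        have := hAkey (m + 2)
        rw [this]
        ring
    exact fun n => (base n).1
  intro n
  rw [key n, sum_eq_A]
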